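/- Let ∇ and ∇' be two torsion-free connections on a smooth manifold M that are projectively equivalent via a 1-form α, i.e. ∇'_X Y − ∇_X Y = α(X) Y + α(Y) X for all vector fields X, Y. If both ∇ and ∇' are adapted to a regular foliation 𝓕 (meaning each maps Vect_𝓕(M) × Γ(T𝓕) into Γ(T𝓕) and Vect_𝓕(M) × Vect_𝓕(M) into Vect_𝓕(M)), then α is a foliated 1-form: in adapted coordinates (x,y), the leafwise components α_ξ vanish and the transverse components α_𝔦 depend only on y. -/
import Mathlib

/-- if two adapted torsion-free connections (given in adapted coordinates
`(x,y)` on `ℝᵖ × ℝ^q` by their Christoffel symbols) are projectively equivalent via a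
1-form `α`, then `α` is foliated: the leafwise components `α_ξ` vanish and the transverse
components `α_𝔦` depend only on `y`. -/
theorem stmt2 (p q : ℕ) (hq : 0 < q)
    (Γ Γ' : ((Fin p → ℝ) × (Fin q → ℝ)) →
      (Fin p ⊕ Fin q) → (Fin p ⊕ Fin q) → (Fin p ⊕ Fin q) → ℝ)
    (α : ((Fin p → ℝ) × (Fin q → ℝ)) → (Fin p ⊕ Fin q) → ℝ)
    -- projective equivalence: Γ'^k_{il} − Γ^k_{il} = α_i δ^k_l + α_l δ^k_i
    (hproj : ∀ m k i l, Γ' m k i l - Γ m k i l =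
      α m i * (if k = l then 1 else 0) + α m l * (if k = i then 1 else 0))
    -- adaptedness of Γ : Γ^𝔨_{iλ} = Γ^𝔨_{λi} = 0
    (hΓ1 : ∀ m (𝔨 : Fin q) (i : Fin p ⊕ Fin q) (ξ : Fin p),
      Γ m (Sum.inr 𝔨) i (Sum.inl ξ) = 0 ∧ Γ m (Sum.inr 𝔨) (Sum.inl ξ) i = 0)
    -- adaptedness of Γ : Γ^𝔨_{𝔦𝔩} depends only on y
    (hΓ2 : ∀ (x x' : Fin p → ℝ) (y : Fin q → ℝ) (𝔨 𝔦 𝔩 : Fin q),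
      Γ (x, y) (Sum.inr 𝔨) (Sum.inr 𝔦) (Sum.inr 𝔩)
        = Γ (x', y) (Sum.inr 𝔨) (Sum.inr 𝔦) (Sum.inr 𝔩))
    -- adaptedness of Γ'
    (hΓ1' : ∀ m (𝔨 : Fin q) (i : Fin p ⊕ Fin q) (ξ : Fin p),
      Γ' m (Sum.inr 𝔨) i (Sum.inl ξ) = 0 ∧ Γ' m (Sum.inr 𝔨) (Sum.inl ξ) i = 0)
    (hΓ2' : ∀ (x x' : Fin p → ℝ) (y : Fin q → ℝ) (𝔨 𝔦 𝔩 : Fin q),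
      Γ' (x, y) (Sum.inr 𝔨) (Sum.inr 𝔦) (Sum.inr 𝔩)
        = Γ' (x', y) (Sum.inr 𝔨) (Sum.inr 𝔦) (Sum.inr 𝔩)) :
    (∀ m (ξ : Fin p), α m (Sum.inl ξ) = 0) ∧
    (∀ (x x' : Fin p → ℝ) (y : Fin q → ℝ) (𝔦 : Fin q),
      α (x, y) (Sum.inr 𝔦) = α (x', y) (Sum.inr 𝔦)) := by
  constructor
  · intro m ξ
    have 𝔨 : Fin q := ⟨0, hq⟩
    have h := hproj m (Sum.inr 𝔨) (Sum.inl ξ) (Sum.inr 𝔨)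
    rw [(hΓ1 m 𝔨 _ ξ).2, (hΓ1' m 𝔨 _ ξ).2] at h
    simpa using h.symm
  · intro x x' y 𝔦
    have h1 := hproj (x, y) (Sum.inr 𝔦) (Sum.inr 𝔦) (Sum.inr 𝔦)
    have h2 := hproj (x', y) (Sum.inr 𝔦) (Sum.inr 𝔦) (Sum.inr 𝔦)
    simp only [if_pos rfl, if_true, mul_one] at h1 h2
    have hΓa := hΓ2 x x' y 𝔦 𝔦 𝔦
    have hΓb := hΓ2' x x' y 𝔦 𝔦 𝔦
    linarith
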